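/- Let H be a topological subgroup of a topological group G, and suppose G acts continuously and amenably on a compact Hausdorff space X. Assume H is amenably embedded in G, in the following sense (equivalent, via the universal property of the Samuel compactification of G with its right uniformity, to amenability of the H-action on that compactification): there is a net of maps ν_j : G → Δ(H) (j ∈ J) such that each ν_j has uniformly finite support (⋃_{g∈G} spt(ν_j(g)) is finite), each ν_j is uniformly continuous from the right uniformity of G to the UEB uniformity on Δ(H) inside the dual of RUCB(H), and for every h ∈ H and every RUEB subset B of the bounded functions on H, sup_{g∈G} sup_{f∈B} |⟨h·ν_j(g), f⟩ − ⟨ν_j(hg), f⟩| → 0 as j → J. Then the restricted action H ↷ X is amenable. -/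

import Mathlib

open Filter Topology MeasureTheory UniformConvergence

/-- `Δ(G)`: finitely supported probability densities on `G`. -/
def IsDelta {G : Type*} (μ : G → ℝ) : Prop :=
  (Function.support μ).Finite ∧ (∀ x, 0 ≤ μ x) ∧ ∑ᶠ x, μ x = 1

/-- The pairing `⟨μ, f⟩ = ∑ₓ μ(x) · f(x)`. -/
noncomputable def dpair {G : Type*} (μ f : G → ℝ) : ℝ := ∑ᶠ x, μ x * f x

/-- Left-translation action on densities: `(g · μ)(x) = μ(g⁻¹x)`. -/
def actD {G : Type*} [Group G] (g : G) (μ : G → ℝ) : G → ℝ := fun x => μ (g⁻¹ * x)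

/-- Action on functionals: `(g · ξ)(f) = ξ(f ∘ λ_g)`. -/
def actF {G : Type*} [Group G] (g : G) (ξ : (G → ℝ) → ℝ) : (G → ℝ) → ℝ :=
  fun f => ξ fun x => f (g * x)

/-- The functional `f ↦ ⟨μ, f⟩` associated with a density `μ`. -/
noncomputable def toFunc {G : Type*} (μ : G → ℝ) : (G → ℝ) → ℝ := fun f => dpair μ f

/-- Bounded right-uniformly continuous functions. -/
def IsRUCB {G : Type*} [Group G] [TopologicalSpace G] (f : G → ℝ) : Prop :=
  (∃ C : ℝ, ∀ x, |f x| ≤ C) ∧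
  ∀ ε > (0 : ℝ), ∃ U ∈ nhds (1 : G), ∀ u ∈ U, ∀ x : G, |f x - f (u * x)| ≤ ε

/-- RUEB sets: sup-norm bounded, right-uniformly equicontinuous. -/
def IsRUEB {G : Type*} [Group G] [TopologicalSpace G] (B : Set (G → ℝ)) : Prop :=
  (∃ C : ℝ, ∀ f ∈ B, ∀ x : G, |f x| ≤ C) ∧
  ∀ ε > (0 : ℝ), ∃ U ∈ nhds (1 : G), ∀ u ∈ U, ∀ f ∈ B, ∀ x : G, |f x - f (u * x)| ≤ ε

/-- Bounded left-uniformly continuous functions. -/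
def IsLUCB {G : Type*} [Group G] [TopologicalSpace G] (f : G → ℝ) : Prop :=
  (∃ C : ℝ, ∀ x, |f x| ≤ C) ∧
  ∀ ε > (0 : ℝ), ∃ U ∈ nhds (1 : G), ∀ u ∈ U, ∀ x : G, |f x - f (x * u)| ≤ ε

/-- LUEB sets: sup-norm bounded, left-uniformly equicontinuous. -/
def IsLUEB {G : Type*} [Group G] [TopologicalSpace G] (B : Set (G → ℝ)) : Prop :=
  (∃ C : ℝ, ∀ f ∈ B, ∀ x : G, |f x| ≤ C) ∧
  ∀ ε > (0 : ℝ), ∃ U ∈ nhds (1 : G), ∀ u ∈ U, ∀ f ∈ B, ∀ x : G, |f x - f (x * u)| ≤ ε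

/-- The UEB uniformity (uniform convergence on RUEB sets) on the space of
functionals on functions on `G`. -/
noncomputable def uebUniformityR (G : Type*) [Group G] [TopologicalSpace G] :
    UniformSpace ((G → ℝ) → ℝ) :=
  ⨅ (B : Set (G → ℝ)) (_ : IsRUEB B),
    UniformSpace.comap (fun ξ => UniformFun.ofFun fun f : B => ξ (f : G → ℝ))
      (UniformFun.uniformSpace (↥B) ℝ)

/-- The UEB topology associated with the right uniformity. -/
noncomputable def uebTopR (G : Type*) [Group G] [TopologicalSpace G] :
    TopologicalSpace ((G → ℝ) → ℝ) := (uebUniformityR G).toTopologicalSpace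

/-- `Mean_u(G_r)`: the UEB-closure of `Δ(G)` inside the functionals. -/
noncomputable def MeanUR (G : Type*) [Group G] [TopologicalSpace G] :
    Set ((G → ℝ) → ℝ) :=
  @closure _ (uebTopR G) (toFunc '' {μ : G → ℝ | IsDelta μ})

/-- The UEB uniformity (uniform convergence on LUEB sets). -/
noncomputable def uebUniformityL (G : Type*) [Group G] [TopologicalSpace G] :
    UniformSpace ((G → ℝ) → ℝ) :=
  ⨅ (B : Set (G → ℝ)) (_ : IsLUEB B),
    UniformSpace.comap (fun ξ => UniformFun.ofFun fun f : B => ξ (f : G → ℝ))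
      (UniformFun.uniformSpace (↥B) ℝ)

/-- The UEB topology associated with the left uniformity. -/
noncomputable def uebTopL (G : Type*) [Group G] [TopologicalSpace G] :
    TopologicalSpace ((G → ℝ) → ℝ) := (uebUniformityL G).toTopologicalSpace

/-- `Mean_u(G_ℓ)`: the UEB-closure of `Δ(G)`. -/
noncomputable def MeanUL (G : Type*) [Group G] [TopologicalSpace G] :
    Set ((G → ℝ) → ℝ) :=
  @closure _ (uebTopL G) (toFunc '' {μ : G → ℝ | IsDelta μ})

/-- Amenability of an action of a topological group on a topological space. -/
def AmenableAction {G : Type*} [Group G] [TopologicalSpace G]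
    {X : Type*} [TopologicalSpace X] (act : G → X → X) : Prop :=
  ∃ (ι : Type) (pι : Preorder ι) (_ : Nonempty ι)
    (_ : IsDirected ι fun a b => pι.le a b)
    (μ : ι → X → (G → ℝ) → ℝ),
    (∀ i x, μ i x ∈ MeanUR G) ∧
    (∀ i, @Continuous X ((G → ℝ) → ℝ) inferInstance (uebTopR G) (μ i)) ∧
    ∀ (g : G) (B : Set (G → ℝ)), IsRUEB B → ∀ ε > (0 : ℝ),
      ∃ i₀, ∀ i, pι.le i₀ i → ∀ x, ∀ f ∈ B,
        |actF g (μ i x) f - μ i (act g x) f| ≤ ε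

/-- Skew-amenability of an action. -/
def SkewAmenableAction {G : Type*} [Group G] [TopologicalSpace G]
    {X : Type*} [TopologicalSpace X] (act : G → X → X) : Prop :=
  ∃ (ι : Type) (pι : Preorder ι) (_ : Nonempty ι)
    (_ : IsDirected ι fun a b => pι.le a b)
    (μ : ι → X → (G → ℝ) → ℝ),
    (∀ i x, μ i x ∈ MeanUL G) ∧
    (∀ i, @Continuous X ((G → ℝ) → ℝ) inferInstance (uebTopL G) (μ i)) ∧
    ∀ (g : G) (B : Set (G → ℝ)), IsLUEB B → ∀ ε > (0 : ℝ),
      ∃ i₀, ∀ i, pι.le i₀ i → ∀ x, ∀ f ∈ B,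
        |actF g (μ i x) f - μ i (act g x) f| ≤ ε

/-- AD-amenability (Anantharaman-Delaroche) of an action of a locally compact
group, with respect to a left Haar measure `ν`. -/
def ADAmenableAction {G : Type*} [Group G] [TopologicalSpace G] [MeasurableSpace G]
    (ν : Measure G) {X : Type*} [TopologicalSpace X] (act : G → X → X) : Prop :=
  ∃ (ι : Type) (pι : Preorder ι) (_ : Nonempty ι)
    (_ : IsDirected ι fun a b => pι.le a b)
    (μ : ι → X → G → ℝ),
    (∀ i x, Integrable (μ i x) ν ∧ (∀ᵐ t ∂ν, 0 ≤ μ i x t) ∧ ∫ t, μ i x t ∂ν = 1) ∧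
    (∀ i (h : G → ℝ), Continuous h → Tendsto h (cocompact G) (nhds 0) →
      Continuous fun x => ∫ t, h t * μ i x t ∂ν) ∧
    ∀ K : Set G, IsCompact K → ∀ ε > (0 : ℝ),
      ∃ i₀, ∀ i, pι.le i₀ i → ∀ g ∈ K, ∀ x,
        ∫ t, |μ i x (g⁻¹ * t) - μ i (act g x) t| ∂ν ≤ ε

/-- Amenability of a topological group: a left-invariant mean on `RUCB(G)`. -/
def AmenableGroup (G : Type*) [Group G] [TopologicalSpace G] : Prop :=
  ∃ m : (G → ℝ) → ℝ,
    (∀ f h : G → ℝ, IsRUCB f → IsRUCB h → m (f + h) = m f + m h) ∧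
    (∀ (c : ℝ) (f : G → ℝ), IsRUCB f → m (c • f) = c * m f) ∧
    (∀ f : G → ℝ, IsRUCB f → (∀ x, 0 ≤ f x) → 0 ≤ m f) ∧
    m (fun _ => 1) = 1 ∧
    ∀ (g : G) (f : G → ℝ), IsRUCB f → m (fun x => f (g * x)) = m f

/-- Well-placed subgroups: there is an `H`-left-equivariant, right-uniformly
continuous map `G → Mean_u(H_r)` (uniform continuity spelled out via the basic
entourages of the right uniformity of `G` and the UEB pseudometrics). -/
def WellPlaced {G : Type*} [Group G] [TopologicalSpace G] (H : Subgroup G) : Prop :=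
  ∃ φ : G → ((↥H → ℝ) → ℝ),
    (∀ g, φ g ∈ MeanUR ↥H) ∧
    (∀ (h : ↥H) (g : G), φ ((h : G) * g) = actF h (φ g)) ∧
    ∀ B : Set (↥H → ℝ), IsRUEB B → ∀ ε > (0 : ℝ), ∃ U ∈ nhds (1 : G),
      ∀ x y : G, x * y⁻¹ ∈ U → ∀ f ∈ B, |φ x f - φ y f| ≤ ε


section AuxSum

variable {G : Type*}

lemma dpair_eq_sum (μ f : G → ℝ) {s : Finset G} (h : Function.support μ ⊆ s) :
    dpair μ f = ∑ x ∈ s, μ x * f x := by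
  apply finsum_eq_sum_of_support_subset
  intro x hx
  exact h (fun h0 => hx (by simp [Function.mem_support, h0] at hx ⊢))

lemma IsDelta.sum_one {μ : G → ℝ} (hμ : IsDelta μ) {s : Finset G}
    (h : Function.support μ ⊆ s) : ∑ x ∈ s, μ x = 1 := by
  rw [← hμ.2.2]; exact (finsum_eq_sum_of_support_subset μ h).symm

lemma dpair_abs_le {μ f : G → ℝ} {C : ℝ} (hμ : IsDelta μ) (hf : ∀ x, |f x| ≤ C) :
    |dpair μ f| ≤ C := by
  classical
  have hs : Function.support μ ⊆ hμ.1.toFinset := by simp [Set.Finite.coe_toFinset]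
  rw [dpair_eq_sum μ f hs]
  calc |∑ x ∈ hμ.1.toFinset, μ x * f x| ≤ ∑ x ∈ hμ.1.toFinset, |μ x * f x| :=
        Finset.abs_sum_le_sum_abs _ _
    _ ≤ ∑ x ∈ hμ.1.toFinset, μ x * C := by
        refine Finset.sum_le_sum fun x _ => ?_
        rw [abs_mul, abs_of_nonneg (hμ.2.1 x)]
        exact mul_le_mul_of_nonneg_left (hf x) (hμ.2.1 x)
    _ = (∑ x ∈ hμ.1.toFinset, μ x) * C := by rw [Finset.sum_mul]
    _ = C := by rw [hμ.sum_one hs, one_mul]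

lemma dpair_sub_abs_le {μ f f' : G → ℝ} {δ : ℝ} (hμ : IsDelta μ)
    (hd : ∀ x, |f x - f' x| ≤ δ) : |dpair μ f - dpair μ f'| ≤ δ := by
  classical
  have hs : Function.support μ ⊆ hμ.1.toFinset := by simp [Set.Finite.coe_toFinset]
  have : dpair μ f - dpair μ f' = dpair μ (fun x => f x - f' x) := by
    rw [dpair_eq_sum μ f hs, dpair_eq_sum μ f' hs, dpair_eq_sum μ _ hs,
      ← Finset.sum_sub_distrib]
    exact Finset.sum_congr rfl fun x _ => by ring
  rw [this]
  exact dpair_abs_le hμ hd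

lemma dpair_actD {H : Type*} [Group H] (h : H) (μ f : H → ℝ) :
    dpair μ (fun t => f (h * t)) = dpair (actD h μ) f := by
  unfold dpair actD
  rw [← finsum_comp_equiv (Equiv.mulLeft h) (f := fun s => μ (h⁻¹ * s) * f s)]
  simp

end AuxSum

section Top

lemma IsRUEB.union {G : Type*} [Group G] [TopologicalSpace G] {B₁ B₂ : Set (G → ℝ)}
    (h1 : IsRUEB B₁) (h2 : IsRUEB B₂) : IsRUEB (B₁ ∪ B₂) := by
  obtain ⟨C₁, hC₁⟩ := h1.1
  obtain ⟨C₂, hC₂⟩ := h2.1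
  constructor
  · exact ⟨max C₁ C₂, fun f hf x => hf.elim
      (fun h => (hC₁ f h x).trans (le_max_left _ _))
      (fun h => (hC₂ f h x).trans (le_max_right _ _))⟩
  · intro ε hε
    obtain ⟨U₁, hU₁, hU₁'⟩ := h1.2 ε hε
    obtain ⟨U₂, hU₂, hU₂'⟩ := h2.2 ε hε
    exact ⟨U₁ ∩ U₂, Filter.inter_mem hU₁ hU₂, fun u hu f hf x => hf.elim
      (fun h => hU₁' u hu.1 f h x) (fun h => hU₂' u hu.2 f h x)⟩

lemma push_RUEB {G H : Type*} [Group G] [TopologicalSpace G] [Group H] [TopologicalSpace H]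
    (ν : G → H → ℝ) (hν : ∀ g, IsDelta (ν g)) {B : Set (H → ℝ)} (hB : IsRUEB B)
    (hc : ∀ ε > (0:ℝ), ∃ U ∈ nhds (1:G), ∀ x y : G, x * y⁻¹ ∈ U →
      ∀ f ∈ B, |dpair (ν x) f - dpair (ν y) f| ≤ ε) :
    IsRUEB ((fun f => fun g => dpair (ν g) f) '' B) := by
  obtain ⟨C, hC⟩ := hB.1
  constructor
  · refine ⟨C, ?_⟩
    rintro φ ⟨f, hf, rfl⟩ g
    exact dpair_abs_le (hν g) (hC f hf)
  · intro ε hε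
    obtain ⟨U, hU, hU'⟩ := hc ε hε
    refine ⟨U, hU, ?_⟩
    rintro u hu φ ⟨f, hf, rfl⟩ g
    rw [abs_sub_comm]
    refine hU' (u * g) g ?_ f hf
    simpa using hu

lemma translate_RUEB {K : Type*} [Group K] [TopologicalSpace K] [IsTopologicalGroup K]
    {B : Set (K → ℝ)} (hB : IsRUEB B) (c : K) :
    IsRUEB ((fun f => fun x => f (c * x)) '' B) := by
  obtain ⟨C, hC⟩ := hB.1
  constructor
  · refine ⟨C, ?_⟩
    rintro φ ⟨f, hf, rfl⟩ x
    exact hC f hf _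
  · intro ε hε
    obtain ⟨U, hU, hU'⟩ := hB.2 ε hε
    have hconj : Filter.Tendsto (fun u : K => c * u * c⁻¹) (nhds 1) (nhds 1) := by
      have h1 : Continuous (fun u : K => c * u * c⁻¹) := by continuity
      simpa using h1.tendsto 1
    refine ⟨(fun u : K => c * u * c⁻¹) ⁻¹' U, hconj hU, ?_⟩
    rintro u hu φ ⟨f, hf, rfl⟩ x
    show |f (c * x) - f (c * (u * x))| ≤ ε
    have h2 : c * (u * x) = (c * u * c⁻¹) * (c * x) := by group
    rw [h2]
    exact hU' _ hu f hf (c * x)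

lemma uebTopR_le {G : Type*} [Group G] [TopologicalSpace G] {B : Set (G → ℝ)}
    (hB : IsRUEB B) :
    uebTopR G ≤ TopologicalSpace.induced
      (fun ξ : (G → ℝ) → ℝ => UniformFun.ofFun fun f : B => ξ (f : G → ℝ))
      (UniformFun.uniformSpace (↥B) ℝ).toTopologicalSpace := by
  rw [uebTopR, ← UniformSpace.toTopologicalSpace_comap]
  exact UniformSpace.toTopologicalSpace_mono (iInf₂_le B hB)

lemma mem_closure_of_le {X : Type*} {t t' : TopologicalSpace X} (h : t ≤ t')
    {s : Set X} {x : X} (hx : x ∈ @closure X t s) : x ∈ @closure X t' s := by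
  rw [@mem_closure_iff_nhds] at hx ⊢
  intro U hU
  exact hx U (nhds_mono h hU)

lemma mean_est {G : Type*} [Group G] [TopologicalSpace G] {ξ : (G → ℝ) → ℝ}
    (hξ : ξ ∈ MeanUR G) {B : Set (G → ℝ)} (hB : IsRUEB B)
    {φ ψ : G → ℝ} (hφ : φ ∈ B) (hψ : ψ ∈ B) {δ : ℝ}
    (hd : ∀ g, |φ g - ψ g| ≤ δ) : |ξ φ - ξ ψ| ≤ δ := by
  set r := fun η : (G → ℝ) → ℝ => UniformFun.ofFun fun f : B => η (f : G → ℝ) with hr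
  set tB := TopologicalSpace.induced r (UniformFun.uniformSpace (↥B) ℝ).toTopologicalSpace
    with htB
  have hcl : ξ ∈ @closure _ tB (toFunc '' {μ : G → ℝ | IsDelta μ}) :=
    mem_closure_of_le (uebTopR_le hB) hξ
  refine le_of_forall_pos_le_add ?_
  intro ε hε
  have hV : {p : ℝ × ℝ | dist p.1 p.2 < ε/2} ∈ uniformity ℝ :=
    Metric.dist_mem_uniformity (by positivity)
  have hN : {η : (G → ℝ) → ℝ |
      (r ξ, r η) ∈ UniformFun.gen ↥B ℝ {p : ℝ × ℝ | dist p.1 p.2 < ε/2}} ∈ @nhds _ tB ξ := by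
    rw [htB, nhds_induced]
    exact Filter.preimage_mem_comap ((UniformFun.hasBasis_nhds ↥B ℝ (r ξ)).mem_of_mem hV)
  rw [@mem_closure_iff_nhds] at hcl
  obtain ⟨η, hηN, hηs⟩ := hcl _ hN
  obtain ⟨μ, hμΔ, rfl⟩ := hηs
  have h1 : |ξ φ - toFunc μ φ| < ε/2 := by
    have h0 := hηN ⟨φ, hφ⟩
    simpa [Real.dist_eq, hr] using h0
  have h2 : |toFunc μ ψ - ξ ψ| < ε/2 := by
    have h0 := hηN ⟨ψ, hψ⟩
    rw [abs_sub_comm]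
    simpa [Real.dist_eq, hr] using h0
  have h3 : |toFunc μ φ - toFunc μ ψ| ≤ δ := dpair_sub_abs_le hμΔ hd
  have t1 := abs_sub_le (ξ φ) (toFunc μ φ) (ξ ψ)
  have t2 := abs_sub_le (toFunc μ φ) (toFunc μ ψ) (ξ ψ)
  linarith

end Top

section Cont

lemma cont_T {G H : Type*} [Group G] [TopologicalSpace G] [Group H] [TopologicalSpace H]
    (Φ : (H → ℝ) → (G → ℝ)) (hΦ : ∀ B : Set (H → ℝ), IsRUEB B → IsRUEB (Φ '' B)) :
    Continuous[uebTopR G, uebTopR H] (fun ξ => fun f => ξ (Φ f)) := by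
  have hteq : uebTopR H = ⨅ (B : Set (H → ℝ)) (_ : IsRUEB B),
      TopologicalSpace.induced
        (fun ξ : (H → ℝ) → ℝ => UniformFun.ofFun fun f : B => ξ (f : H → ℝ))
        (UniformFun.uniformSpace (↥B) ℝ).toTopologicalSpace := by
    rw [uebTopR, uebUniformityR]
    simp only [UniformSpace.toTopologicalSpace_iInf, UniformSpace.toTopologicalSpace_comap]
  rw [hteq]
  refine continuous_iInf_rng.2 fun B => continuous_iInf_rng.2 fun hB =>
    continuous_induced_rng.2 ?_
  have hB' := hΦ B hB
  have step1 : Continuous[uebTopR G, (UniformFun.uniformSpace (↥(Φ '' B)) ℝ).toTopologicalSpace]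
      (fun ξ : (G → ℝ) → ℝ => UniformFun.ofFun fun f : ↥(Φ '' B) => ξ (f : G → ℝ)) :=
    continuous_iff_le_induced.2 (uebTopR_le hB')
  set q : ↥B → ↥(Φ '' B) := fun f => ⟨Φ f, ⟨(f : H → ℝ), f.2, rfl⟩⟩ with hq
  have step2 : Continuous fun u : ↥(Φ '' B) →ᵤ ℝ =>
      UniformFun.ofFun (UniformFun.toFun u ∘ q) :=
    (UniformFun.precomp_uniformContinuous).continuous
  exact @Continuous.comp ((G → ℝ) → ℝ) (↥(Φ '' B) →ᵤ ℝ) (↥B →ᵤ ℝ) (uebTopR G) _ _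
    (fun ξ : (G → ℝ) → ℝ => UniformFun.ofFun fun f : ↥(Φ '' B) => ξ (f : G → ℝ))
    (fun u : ↥(Φ '' B) →ᵤ ℝ => UniformFun.ofFun (UniformFun.toFun u ∘ q))
    step2 step1

lemma T_maps {G H : Type*} (ν : G → H → ℝ) (hν : ∀ g, IsDelta (ν g))
    (hfin : (⋃ g : G, Function.support (ν g)).Finite) {σ : G → ℝ} (hσ : IsDelta σ) :
    ∃ σ' : H → ℝ, IsDelta σ' ∧
      (fun f => toFunc σ (fun g => dpair (ν g) f)) = toFunc σ' := by
  classical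
  set S := hσ.1.toFinset with hS
  set T := hfin.toFinset with hT
  have hσsub : Function.support σ ⊆ (S : Set G) := by simp [hS, Set.Finite.coe_toFinset]
  have hνsub : ∀ g : G, Function.support (ν g) ⊆ (T : Set H) := by
    intro g t ht
    rw [hT, Set.Finite.coe_toFinset]
    exact Set.mem_iUnion.2 ⟨g, ht⟩
  set σ' : H → ℝ := fun t => ∑ g ∈ S, σ g * ν g t with hσ'
  have hσ'sub : Function.support σ' ⊆ (T : Set H) := by
    intro t ht
    rw [Function.mem_support] at ht
    by_contra hc
    refine ht (Finset.sum_eq_zero fun g _ => ?_)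
    have : ν g t = 0 := by
      by_contra h0
      exact hc (hνsub g h0)
    simp [this]
  have hδ : IsDelta σ' := by
    refine ⟨Set.Finite.subset T.finite_toSet hσ'sub, fun t =>
      Finset.sum_nonneg fun g _ => mul_nonneg (hσ.2.1 g) ((hν g).2.1 t), ?_⟩
    rw [finsum_eq_sum_of_support_subset σ' (s := T) hσ'sub]
    rw [hσ']
    rw [Finset.sum_comm]
    have : ∀ g ∈ S, ∑ t ∈ T, σ g * ν g t = σ g := by
      intro g _
      rw [← Finset.mul_sum, (hν g).sum_one (hνsub g), mul_one]
    rw [Finset.sum_congr rfl this]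
    exact hσ.sum_one hσsub
  refine ⟨σ', hδ, ?_⟩
  funext f
  show dpair σ (fun g => dpair (ν g) f) = dpair σ' f
  rw [dpair_eq_sum σ _ hσsub, dpair_eq_sum σ' f hσ'sub]
  have lhs : ∀ g ∈ S, σ g * dpair (ν g) f = ∑ t ∈ T, σ g * (ν g t * f t) := by
    intro g _
    rw [dpair_eq_sum (ν g) f (hνsub g), Finset.mul_sum]
  rw [Finset.sum_congr rfl lhs, Finset.sum_comm]
  refine Finset.sum_congr rfl fun t _ => ?_
  rw [hσ', Finset.sum_mul]
  exact Finset.sum_congr rfl fun g _ => by ring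

lemma T_mem {G H : Type*} [Group G] [TopologicalSpace G] [Group H] [TopologicalSpace H]
    (ν : G → H → ℝ) (hν : ∀ g, IsDelta (ν g))
    (hfin : (⋃ g : G, Function.support (ν g)).Finite)
    (hΦ : ∀ B : Set (H → ℝ), IsRUEB B → IsRUEB ((fun f => fun g => dpair (ν g) f) '' B))
    {ξ : (G → ℝ) → ℝ} (hξ : ξ ∈ MeanUR G) :
    (fun f => ξ (fun g => dpair (ν g) f)) ∈ MeanUR H := by
  have hT := cont_T (fun f => fun g => dpair (ν g) f) hΦ
  refine @map_mem_closure _ _ (uebTopR G) (uebTopR H)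
      (fun ξ : (G → ℝ) → ℝ => fun f : H → ℝ => ξ (fun g => dpair (ν g) f))
      (toFunc '' {μ : G → ℝ | IsDelta μ}) ξ (toFunc '' {μ : H → ℝ | IsDelta μ})
      hT hξ ?_
  rintro ζ ⟨σ, hσ, rfl⟩
  obtain ⟨σ', hσ', heq⟩ := T_maps ν hν hfin hσ
  exact ⟨σ', hσ', heq.symm⟩

end Cont
/-- Theorem 5.3: if `H` is amenably embedded in `G` and `G ↷ X` is amenable, then the
restricted action `H ↷ X` is amenable. -/

theorem amenably_embedded_restriction {G : Type*} [Group G] [TopologicalSpace G]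
    [IsTopologicalGroup G]
    {X : Type*} [TopologicalSpace X] [CompactSpace X] [T2Space X]
    [MulAction G X] [ContinuousSMul G X] (H : Subgroup G)
    (hGX : AmenableAction fun (g : G) (x : X) => g • x)
    (hemb : ∃ (J : Type) (pJ : Preorder J) (_ : Nonempty J)
      (_ : IsDirected J fun a b => pJ.le a b)
      (ν : J → G → ↥H → ℝ),
      (∀ (j : J) (g : G), IsDelta (ν j g)) ∧
      (∀ j : J, (⋃ g : G, Function.support (ν j g)).Finite) ∧
      (∀ (j : J) (B : Set (↥H → ℝ)), IsRUEB B → ∀ ε > (0 : ℝ),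
        ∃ U ∈ nhds (1 : G), ∀ x y : G, x * y⁻¹ ∈ U →
          ∀ f ∈ B, |dpair (ν j x) f - dpair (ν j y) f| ≤ ε) ∧
      (∀ (h : ↥H) (B : Set (↥H → ℝ)), IsRUEB B → ∀ ε > (0 : ℝ),
        ∃ j₀, ∀ j, pJ.le j₀ j → ∀ g : G, ∀ f ∈ B,
          |dpair (actD h (ν j g)) f - dpair (ν j ((h : G) * g)) f| ≤ ε)) :
    AmenableAction fun (h : ↥H) (x : X) => (h : G) • x := by
  classical
  obtain ⟨ι, pι, hneι, hdirι, μ, hmem, hcont, hlim⟩ := hGX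
  obtain ⟨J, pJ, hneJ, hdirJ, ν, hΔ, hfin, hunif, hequi⟩ := hemb
  have hΦRUEB : ∀ (j : J) (B : Set (↥H → ℝ)), IsRUEB B →
      IsRUEB ((fun f => fun g : G => dpair (ν j g) f) '' B) := fun j B hB =>
    push_RUEB (ν j) (hΔ j) hB (hunif j B hB)
  -- the directed index set
  refine ⟨J × (J → ι),
    { le := fun a b => pJ.le a.1 b.1 ∧ ∀ j, pι.le (a.2 j) (b.2 j)
      le_refl := fun a => ⟨pJ.le_refl a.1, fun j => pι.le_refl (a.2 j)⟩
      le_trans := fun a b c hab hbc =>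
        ⟨pJ.le_trans _ _ _ hab.1 hbc.1, fun j => pι.le_trans _ _ _ (hab.2 j) (hbc.2 j)⟩ },
    ⟨⟨hneJ.some, fun _ => hneι.some⟩⟩,
    ⟨fun a b => by
      obtain ⟨j', hja, hjb⟩ := hdirJ.directed a.1 b.1
      refine ⟨⟨j', fun j => (hdirι.directed (a.2 j) (b.2 j)).choose⟩,
        ⟨hja, fun j => ((hdirι.directed (a.2 j) (b.2 j)).choose_spec).1⟩,
        ⟨hjb, fun j => ((hdirι.directed (a.2 j) (b.2 j)).choose_spec).2⟩⟩⟩,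
    fun k x => fun f => μ (k.2 k.1) x (fun g => dpair (ν k.1 g) f),
    ?_, ?_, ?_⟩
  · -- membership in MeanUR ↥H
    intro k x
    exact T_mem (ν k.1) (hΔ k.1) (hfin k.1) (hΦRUEB k.1) (hmem (k.2 k.1) x)
  · -- continuity
    intro k
    exact @Continuous.comp X ((G → ℝ) → ℝ) ((↥H → ℝ) → ℝ) _ (uebTopR G) (uebTopR ↥H)
      (μ (k.2 k.1))
      (fun ξ : (G → ℝ) → ℝ => fun f : ↥H → ℝ => ξ (fun g => dpair (ν k.1 g) f))
      (cont_T (fun f => fun g : G => dpair (ν k.1 g) f) (hΦRUEB k.1))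
      (hcont (k.2 k.1))
  · -- approximate equivariance
    intro h B hB ε hε
    have hε2 : (0:ℝ) < ε/2 := by positivity
    obtain ⟨j₀, hj₀⟩ := hequi h B hB (ε/2) hε2
    have hP : ∀ j : J, ∃ i₀ : ι, ∀ i, pι.le i₀ i → ∀ x : X,
        ∀ f' ∈ (fun f => fun g : G => dpair (ν j g) f) '' B,
        |actF (h : G) (μ i x) f' - μ i ((h : G) • x) f'| ≤ ε/2 := fun j =>
      hlim (h : G) _ (hΦRUEB j B hB) (ε/2) hε2
    refine ⟨⟨j₀, fun j => (hP j).choose⟩, ?_⟩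
    rintro ⟨j, φι⟩ ⟨hkJ, hkι⟩ x f hf
    have hA : ∀ g : G,
        |dpair (ν j g) (fun t => f (h * t)) - dpair (ν j ((h : G) * g)) f| ≤ ε/2 := by
      intro g
      rw [dpair_actD]
      exact hj₀ j hkJ g f hf
    have hA' : |μ (φι j) x (fun g => dpair (ν j g) (fun t => f (h * t)))
        - μ (φι j) x (fun g => dpair (ν j ((h : G) * g)) f)| ≤ ε/2 := by
      refine mean_est (hmem (φι j) x)
        (IsRUEB.union (hΦRUEB j _ (translate_RUEB hB h))
          (translate_RUEB (hΦRUEB j B hB) ((h : G)))) ?_ ?_ hA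
      · exact Set.mem_union_left _ ⟨fun t => f (h * t), ⟨f, hf, rfl⟩, rfl⟩
      · exact Set.mem_union_right _ ⟨fun g => dpair (ν j g) f, ⟨f, hf, rfl⟩, rfl⟩
    have hB2 : |μ (φι j) x (fun g => dpair (ν j ((h : G) * g)) f)
        - μ (φι j) ((h : G) • x) (fun g => dpair (ν j g) f)| ≤ ε/2 :=
      (hP j).choose_spec (φι j) (hkι j) x (fun g => dpair (ν j g) f) ⟨f, hf, rfl⟩
    show |μ (φι j) x (fun g => dpair (ν j g) (fun t => f (h * t)))
        - μ (φι j) ((h : G) • x) (fun g => dpair (ν j g) f)| ≤ ε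
    have tri := abs_sub_le (μ (φι j) x (fun g => dpair (ν j g) (fun t => f (h * t))))
      (μ (φι j) x (fun g => dpair (ν j ((h : G) * g)) f))
      (μ (φι j) ((h : G) • x) (fun g => dpair (ν j g) f))
    linarith
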